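/- With the notation of the context, define G(v, k, l, l') := G_θ(v^{(𝟏)}) · Φ_{θ,ϑ}(v) · b^{(1)}_{θ,ϑ}(k|v) · b^{ref}_{θ,ϑ}(l|v) · b̃^{ref}_{ϑ,θ}(l'|v). Then for all v ∈ Z^{T·M} and all k, l, l' ∈ {1,…,M}^T one has G(s_{1,l}(v), 𝔯_l(k), l, 𝔯_l(l')) = G(v, k, l, l'). Consequently, the delayed-rejection refreshment move of the MHAAR-RB algorithm, which upon rejection replaces the latent variable v^{(𝟏)} by v^{(l)} with l drawn from b^{ref}_{θ,ϑ}(·|v), leaves the joint target distribution invariant. -/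
import Mathlib


open MeasureTheory Finset

namespace MHAARRB10

variable {Z : Type*}

/-- The path `v^{(k)}` extracted from the particle array `v`. -/
def pathOf (n m : ℕ) (v : Fin (n + 1) → Fin (m + 1) → Z)
    (k : Fin (n + 1) → Fin (m + 1)) : Fin (n + 1) → Z := fun t => v t (k t)

/-- The constant index path `𝟏`. -/
def onePath (n m : ℕ) : Fin (n + 1) → Fin (m + 1) := fun _ => 0

/-- The swap operator `s_{1,l}`. -/
def swapArr (n m : ℕ) (l : Fin (n + 1) → Fin (m + 1))
    (v : Fin (n + 1) → Fin (m + 1) → Z) : Fin (n + 1) → Fin (m + 1) → Z :=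
  fun t i => v t (Equiv.swap 0 (l t) i)

/-- The index relabelling `𝔯_l(k)`. -/
def relabel (n m : ℕ) (l k : Fin (n + 1) → Fin (m + 1)) : Fin (n + 1) → Fin (m + 1) :=
  fun t => if k t = 0 then l t else if k t = l t then 0 else k t

/-- `G_θ(z) = ∏_t γ_{t,θ}(z_t)`. -/
noncomputable def G (n : ℕ) (γ : Fin (n + 1) → Z → ℝ) (z : Fin (n + 1) → Z) : ℝ :=
  ∏ t, γ t (z t)

/-- The proposal density `Φ_{θ,ϑ}(v) = ∏_t ∏_{i≥2} q_{t,θ,ϑ}(v_t^{(i)})`. -/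
noncomputable def Phi (n m : ℕ) (qp : Fin (n + 1) → Z → ℝ)
    (v : Fin (n + 1) → Fin (m + 1) → Z) : ℝ :=
  ∏ t, ∏ i ∈ univ.erase (0 : Fin (m + 1)), qp t (v t i)

/-- Selection probabilities of the form
`∏_t [γ_t(v_t^{(k_t)})/q_t(v_t^{(k_t)})] / [∑_i γ_t(v_t^{(i)})/q_t(v_t^{(i)})]`;
this gives `b^{(1)}_{θ,ϑ}` and `b̃^{ref}_{ϑ,θ}` for `γ = γ_ϑ`, and `b^{ref}_{θ,ϑ}`
for `γ = γ_θ` (all with `q = q_{θ,ϑ}`). -/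
noncomputable def bSel (n m : ℕ) (γ qp : Fin (n + 1) → Z → ℝ)
    (k : Fin (n + 1) → Fin (m + 1)) (v : Fin (n + 1) → Fin (m + 1) → Z) : ℝ :=
  ∏ t, (γ t (v t (k t)) / qp t (v t (k t))) / (∑ i, γ t (v t i) / qp t (v t i))

/-- The joint density
`G(v,k,l,l') = G_θ(v^{(𝟏)}) Φ_{θ,ϑ}(v) b^{(1)}_{θ,ϑ}(k|v) b^{ref}_{θ,ϑ}(l|v) b̃^{ref}_{ϑ,θ}(l'|v)`. -/
noncomputable def Gjoint (n m : ℕ) (γθ γϑ qp : Fin (n + 1) → Z → ℝ)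
    (v : Fin (n + 1) → Fin (m + 1) → Z) (k l l' : Fin (n + 1) → Fin (m + 1)) : ℝ :=
  G n γθ (pathOf n m v (onePath n m)) * Phi n m qp v *
    bSel n m γϑ qp k v * bSel n m γθ qp l v * bSel n m γϑ qp l' v

lemma swap_relabel_aux {m : ℕ} (a b : Fin (m + 1)) :
    Equiv.swap 0 a (if b = 0 then a else if b = a then 0 else b) = b := by
  by_cases h0 : b = 0
  · simp [h0]
  · by_cases ha : b = a
    · subst ha
      rw [if_neg h0, if_pos rfl, Equiv.swap_apply_left]
    · simp [h0, ha, Equiv.swap_apply_of_ne_of_ne h0 ha]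

lemma prod_erase_swap_aux {m : ℕ} (a : Fin (m + 1)) (f : Fin (m + 1) → ℝ)
    (hf : ∀ i, f i ≠ 0) :
    ∏ i ∈ univ.erase (0 : Fin (m + 1)), f (Equiv.swap 0 a i) = (∏ i, f i) / f a := by
  have h1 : f (Equiv.swap 0 a 0) * ∏ i ∈ univ.erase (0 : Fin (m + 1)),
      f (Equiv.swap 0 a i) = ∏ i, f (Equiv.swap 0 a i) :=
    Finset.mul_prod_erase univ (fun i => f (Equiv.swap 0 a i)) (mem_univ (0 : Fin (m + 1)))
  rw [Equiv.swap_apply_left, Equiv.prod_comp] at h1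
  rw [eq_div_iff (hf a), mul_comm]
  exact h1

lemma prod_erase_zero_aux {m : ℕ} (f : Fin (m + 1) → ℝ) (hf : ∀ i, f i ≠ 0) :
    ∏ i ∈ univ.erase (0 : Fin (m + 1)), f i = (∏ i, f i) / f 0 := by
  rw [eq_div_iff (hf 0), mul_comm]
  exact Finset.mul_prod_erase univ f (mem_univ (0 : Fin (m + 1)))

/-- For all `v`, `k`, `l`, `l'`,
`G(s_{1,l}(v), 𝔯_l(k), l, 𝔯_l(l')) = G(v, k, l, l')`; consequently the
delayed-rejection refreshment move of the MHAAR-RB algorithm leaves the joint target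
distribution invariant. -/
theorem delayed_rejection_invariance
    [MeasurableSpace Z] (n m : ℕ)
    (γθ γϑ qp qpb : Fin (n + 1) → Z → ℝ)
    (hγθm : ∀ t, Measurable (γθ t)) (hγϑm : ∀ t, Measurable (γϑ t))
    (hqpm : ∀ t, Measurable (qp t)) (hqpbm : ∀ t, Measurable (qpb t))
    (hγθ : ∀ t z, 0 < γθ t z) (hγϑ : ∀ t z, 0 < γϑ t z)
    (hqp : ∀ t z, 0 < qp t z) (hqpb : ∀ t z, 0 < qpb t z)
    (v : Fin (n + 1) → Fin (m + 1) → Z) (k l l' : Fin (n + 1) → Fin (m + 1)) :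
    Gjoint n m γθ γϑ qp (swapArr n m l v) (relabel n m l k) l (relabel n m l l')
      = Gjoint n m γθ γϑ qp v k l l' := by
  simp only [Gjoint, G, Phi, bSel, pathOf, onePath, swapArr, relabel,
    ← Finset.prod_mul_distrib]
  refine Finset.prod_congr rfl fun t _ => ?_
  have hsϑ : (∑ i, γϑ t (v t (Equiv.swap 0 (l t) i)) / qp t (v t (Equiv.swap 0 (l t) i)))
      = ∑ i, γϑ t (v t i) / qp t (v t i) :=
    Equiv.sum_comp (Equiv.swap 0 (l t)) (fun i => γϑ t (v t i) / qp t (v t i))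
  have hsθ : (∑ i, γθ t (v t (Equiv.swap 0 (l t) i)) / qp t (v t (Equiv.swap 0 (l t) i)))
      = ∑ i, γθ t (v t i) / qp t (v t i) :=
    Equiv.sum_comp (Equiv.swap 0 (l t)) (fun i => γθ t (v t i) / qp t (v t i))
  have hp : (∏ i ∈ univ.erase (0 : Fin (m + 1)), qp t (v t (Equiv.swap 0 (l t) i)))
      = (∏ i, qp t (v t i)) / qp t (v t (l t)) :=
    prod_erase_swap_aux (l t) (fun i => qp t (v t i)) (fun i => (hqp t _).ne')
  have hp0 : (∏ i ∈ univ.erase (0 : Fin (m + 1)), qp t (v t i))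
      = (∏ i, qp t (v t i)) / qp t (v t 0) :=
    prod_erase_zero_aux (fun i => qp t (v t i)) (fun i => (hqp t _).ne')
  rw [hsϑ, hsθ, hp, hp0, swap_relabel_aux (l t) (k t), swap_relabel_aux (l t) (l' t),
    Equiv.swap_apply_left, Equiv.swap_apply_right]
  ring

end MHAARRB10
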